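/- Let A ∈ ℝ^{m×n} and B ∈ ℝ^{n×p} with A*B = 0. Then ℝ^n decomposes as the internal direct sum of the image of Aᵀ, the kernel of AᵀA + BBᵀ, and the image of B. -/

import Mathlib

open Matrix

lemma dp_self_nonneg {k : ℕ} (v : Fin k → ℝ) : 0 ≤ v ⬝ᵥ v :=
  Finset.sum_nonneg fun _ _ => mul_self_nonneg _

lemma ker_key {m n p : ℕ} (A : Matrix (Fin m) (Fin n) ℝ) (B : Matrix (Fin n) (Fin p) ℝ)
    (x : Fin n → ℝ) (hx : (Aᵀ * A + B * Bᵀ) *ᵥ x = 0) : A *ᵥ x = 0 ∧ Bᵀ *ᵥ x = 0 := by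
  have h0 : x ⬝ᵥ ((Aᵀ * A + B * Bᵀ) *ᵥ x) = 0 := by rw [hx, dotProduct_zero]
  have h1 : x ⬝ᵥ ((Aᵀ * A + B * Bᵀ) *ᵥ x)
      = (A *ᵥ x) ⬝ᵥ (A *ᵥ x) + (Bᵀ *ᵥ x) ⬝ᵥ (Bᵀ *ᵥ x) := by
    rw [add_mulVec, dotProduct_add, ← mulVec_mulVec, ← mulVec_mulVec,
      dotProduct_mulVec, vecMul_transpose, dotProduct_mulVec x B, mulVec_transpose]
  rw [h1] at h0
  have ha : (A *ᵥ x) ⬝ᵥ (A *ᵥ x) = 0 := by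
    linarith [dp_self_nonneg (A *ᵥ x), dp_self_nonneg (Bᵀ *ᵥ x)]
  have hb : (Bᵀ *ᵥ x) ⬝ᵥ (Bᵀ *ᵥ x) = 0 := by linarith [dp_self_nonneg (A *ᵥ x)]
  exact ⟨dotProduct_self_eq_zero.mp ha, dotProduct_self_eq_zero.mp hb⟩

lemma aux_internal {n : ℕ} (K : Fin 3 → Submodule ℝ (Fin n → ℝ))
    (horth : ∀ i j : Fin 3, i ≠ j → ∀ u ∈ K i, ∀ v ∈ K j, u ⬝ᵥ v = 0)
    (hfull : ∀ x : Fin n → ℝ, (∀ i : Fin 3, ∀ u ∈ K i, u ⬝ᵥ x = 0) → x = 0) :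
    DirectSum.IsInternal K := by
  let e : (Fin n → ℝ) ≃ₗ[ℝ] EuclideanSpace ℝ (Fin n) :=
    (WithLp.linearEquiv 2 ℝ (Fin n → ℝ)).symm
  have hinner : ∀ u v : Fin n → ℝ, (inner ℝ (e u) (e v) : ℝ) = u ⬝ᵥ v := by
    intro u v
    simp [e, PiLp.inner_apply, dotProduct, mul_comm]
  let V : Fin 3 → Submodule ℝ (EuclideanSpace ℝ (Fin n)) := fun i => (K i).map e.toLinearMap
  have memV : ∀ (i : Fin 3) (y : EuclideanSpace ℝ (Fin n)), y ∈ V i ↔ e.symm y ∈ K i := by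
    intro i y
    exact Submodule.mem_map_equiv (e := e) (x := y) (p := K i)
  have hOrth : OrthogonalFamily ℝ (fun i => V i) fun i => (V i).subtypeₗᵢ := by
    intro i j hij v w
    obtain ⟨v, hv⟩ := v
    obtain ⟨w, hw⟩ := w
    rw [memV] at hv hw
    simp only [Submodule.coe_subtypeₗᵢ, Submodule.coe_subtype]
    have hvw : (inner ℝ v w : ℝ) = (e.symm v) ⬝ᵥ (e.symm w) := by
      rw [← hinner, LinearEquiv.apply_symm_apply, LinearEquiv.apply_symm_apply]
    rw [hvw]
    exact horth i j hij _ hv _ hw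
  have hbot : (iSup V)ᗮ = ⊥ := by
    rw [Submodule.eq_bot_iff]
    intro x hx
    have hx0 : e.symm x = 0 := by
      apply hfull
      intro i u hu
      have hmem : e u ∈ V i := by rw [memV, LinearEquiv.symm_apply_apply]; exact hu
      have h := hx (e u) (Submodule.mem_iSup_of_mem i hmem)
      rw [← h, ← hinner u (e.symm x), LinearEquiv.apply_symm_apply]
    have : x = e 0 := by rw [← hx0, LinearEquiv.apply_symm_apply]
    simpa using this
  have hIntV : DirectSum.IsInternal V := (hOrth.isInternal_iff).mpr hbot
  rw [DirectSum.isInternal_submodule_iff_iSupIndep_and_iSup_eq_top] at hIntV ⊢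
  constructor
  · have h1 := hIntV.1
    exact (iSupIndep_map_orderIso_iff (Submodule.orderIsoMapComap e)).mp h1
  · have h2 : Submodule.map e.toLinearMap (⨆ i, K i) = ⊤ := by
      rw [Submodule.map_iSup]
      exact hIntV.2
    have h3 := congrArg (Submodule.comap e.toLinearMap) h2
    rwa [Submodule.comap_map_eq_of_injective (f := e.toLinearMap) (fun a b h => e.injective h) (⨆ i, K i),
      Submodule.comap_top] at h3

theorem stmt_1 (m n p : ℕ) (A : Matrix (Fin m) (Fin n) ℝ) (B : Matrix (Fin n) (Fin p) ℝ)
    (hAB : A * B = 0) :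
    DirectSum.IsInternal
      (![LinearMap.range (Aᵀ).mulVecLin,
        LinearMap.ker (Aᵀ * A + B * Bᵀ).mulVecLin,
        LinearMap.range B.mulVecLin] : Fin 3 → Submodule ℝ (Fin n → ℝ)) := by
  apply aux_internal
  · -- orthogonality
    have o01 : ∀ u ∈ LinearMap.range (Aᵀ).mulVecLin,
        ∀ v ∈ LinearMap.ker (Aᵀ * A + B * Bᵀ).mulVecLin, u ⬝ᵥ v = 0 := by
      rintro u ⟨w, rfl⟩ v hv
      rw [LinearMap.mem_ker, Matrix.mulVecLin_apply] at hv
      rw [Matrix.mulVecLin_apply, dotProduct_comm, dotProduct_mulVec, vecMul_transpose,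
        (ker_key A B v hv).1, zero_dotProduct]
    have o02 : ∀ u ∈ LinearMap.range (Aᵀ).mulVecLin,
        ∀ v ∈ LinearMap.range B.mulVecLin, u ⬝ᵥ v = 0 := by
      rintro u ⟨w, rfl⟩ v ⟨w', rfl⟩
      rw [Matrix.mulVecLin_apply, Matrix.mulVecLin_apply, dotProduct_mulVec,
        mulVec_transpose, vecMul_vecMul, hAB]
      simp
    have o12 : ∀ u ∈ LinearMap.ker (Aᵀ * A + B * Bᵀ).mulVecLin,
        ∀ v ∈ LinearMap.range B.mulVecLin, u ⬝ᵥ v = 0 := by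
      rintro u hu v ⟨w, rfl⟩
      rw [LinearMap.mem_ker, Matrix.mulVecLin_apply] at hu
      rw [Matrix.mulVecLin_apply, dotProduct_mulVec, ← mulVec_transpose,
        (ker_key A B u hu).2, zero_dotProduct]
    intro i j hij u hu v hv
    fin_cases i <;> fin_cases j <;>
      simp only [Matrix.cons_val_zero, Matrix.cons_val_one, Matrix.head_cons,
        Matrix.cons_val_two, Matrix.tail_cons] at hu hv hij ⊢ <;>
      first
        | exact absurd rfl hij
        | exact o01 u hu v hv
        | exact o02 u hu v hv
        | exact o12 u hu v hv
        | (rw [dotProduct_comm]; exact o01 v hv u hu)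
        | (rw [dotProduct_comm]; exact o02 v hv u hu)
        | (rw [dotProduct_comm]; exact o12 v hv u hu)
  · -- fullness
    intro x hx
    have hA : A *ᵥ x = 0 := by
      have h := hx 0 (Aᵀ *ᵥ (A *ᵥ x)) ⟨A *ᵥ x, rfl⟩
      rw [dotProduct_comm, dotProduct_mulVec, vecMul_transpose] at h
      exact dotProduct_self_eq_zero.mp h
    have hB : Bᵀ *ᵥ x = 0 := by
      have h := hx 2 (B *ᵥ (Bᵀ *ᵥ x)) ⟨Bᵀ *ᵥ x, rfl⟩
      rw [dotProduct_comm, dotProduct_mulVec, ← mulVec_transpose] at h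
      exact dotProduct_self_eq_zero.mp h
    have hker : x ∈ LinearMap.ker (Aᵀ * A + B * Bᵀ).mulVecLin := by
      rw [LinearMap.mem_ker, Matrix.mulVecLin_apply, add_mulVec, ← mulVec_mulVec,
        ← mulVec_mulVec, hA, hB]
      simp
    have h := hx 1 x hker
    exact dotProduct_self_eq_zero.mp h
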